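/- Let G be a finite simple graph with Ore-degree θ(G) ≤ 7 such that G admits no strong edge-coloring with 13 colors but every proper subgraph of G admits a strong edge-coloring with 13 colors. Then for every edge uv of G, the graph obtained from G by deleting both vertices u and v is connected; that is, {u,v} is not a vertex cut of G. -/

import Mathlib

/-- Two edges `e` and `f` of a graph `G` *see* each other if they are contained in a
common path or cycle of length at most three, i.e. they share an endpoint or some
endpoint of `e` is adjacent to some endpoint of `f`. -/
def SimpleGraph.Sees {V : Type*} (G : SimpleGraph V) (e f : Sym2 V) : Prop :=
  ∃ u ∈ e, ∃ v ∈ f, u = v ∨ G.Adj u v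

/-- `c` is a strong edge-coloring of `G`: edges that see each other get distinct colors. -/
def SimpleGraph.IsStrongEdgeColoring {V α : Type*} (G : SimpleGraph V) (c : Sym2 V → α) : Prop :=
  ∀ e ∈ G.edgeSet, ∀ f ∈ G.edgeSet, e ≠ f → G.Sees e f → c e ≠ c f

/-- `G` admits a strong edge-coloring with `n` colors. -/
def SimpleGraph.HasStrongColoring {V : Type*} (G : SimpleGraph V) (n : ℕ) : Prop :=
  ∃ c : Sym2 V → Fin n, G.IsStrongEdgeColoring c

open SimpleGraph

lemma sees_symm {V : Type*} {G : SimpleGraph V} {e f : Sym2 V} (h : G.Sees e f) : G.Sees f e := by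
  obtain ⟨a, ha, b, hb, hab⟩ := h
  rcases hab with rfl | hab
  · exact ⟨a, hb, a, ha, Or.inl rfl⟩
  · exact ⟨b, hb, a, ha, Or.inr hab.symm⟩

-- L0: transport along iso
lemma hasStrongColoring_of_iso {V W : Type*} {G : SimpleGraph V} {H : SimpleGraph W}
    (φ : G ≃g H) {n : ℕ} (h : H.HasStrongColoring n) : G.HasStrongColoring n := by
  obtain ⟨c, hc⟩ := h
  refine ⟨fun e => c (e.map φ), ?_⟩
  intro e he f hf hef hsees
  have hmape : e.map φ ∈ H.edgeSet := by
    induction e with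
    | _ x y => simpa using (φ.map_adj_iff.2 (by simpa using he))
  have hmapf : f.map φ ∈ H.edgeSet := by
    induction f with
    | _ x y => simpa using (φ.map_adj_iff.2 (by simpa using hf))
  refine hc _ hmape _ hmapf ?_ ?_
  · exact fun h => hef (Sym2.map.injective φ.injective h)
  · obtain ⟨a, ha, b, hb, hab⟩ := hsees
    refine ⟨φ a, Sym2.mem_map.2 ⟨a, ha, rfl⟩, φ b, Sym2.mem_map.2 ⟨b, hb, rfl⟩, ?_⟩
    rcases hab with rfl | hab
    · exact Or.inl rfl
    · exact Or.inr (φ.map_adj_iff.2 hab)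

-- L1: from coe of spanning subgraph
lemma hasStrongColoring_of_toSubgraph {V : Type*} {G G' : SimpleGraph V} (h : G' ≤ G) {n : ℕ}
    (hc : (SimpleGraph.toSubgraph G' h).coe.HasStrongColoring n) : G'.HasStrongColoring n := by
  refine hasStrongColoring_of_iso (φ := ?_) hc
  exact { toEquiv := (Equiv.Set.univ V).symm, map_rel_iff' := by intro a b; rfl }

-- L2: extend pair of injections to permutation
lemma exists_perm_comp {ι : Type*} [Fintype ι] {n : ℕ} (j1 j2 : ι → Fin n)
    (h1 : Function.Injective j1) (h2 : Function.Injective j2) :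
    ∃ π : Equiv.Perm (Fin n), ∀ i, π (j2 i) = j1 i := by
  classical
  have hcard : Fintype.card ((Set.range j2)ᶜ : Set (Fin n)) =
      Fintype.card ((Set.range j1)ᶜ : Set (Fin n)) := by
    have c1 : Fintype.card (Set.range j1) = Fintype.card ι := Set.card_range_of_injective h1
    have c2 : Fintype.card (Set.range j2) = Fintype.card ι := Set.card_range_of_injective h2
    have := Fintype.card_compl_set (Set.range j1)
    have := Fintype.card_compl_set (Set.range j2)
    omega
  let eC : ((Set.range j2)ᶜ : Set (Fin n)) ≃ ((Set.range j1)ᶜ : Set (Fin n)) :=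
    Fintype.equivOfCardEq hcard
  let eR : (Set.range j2 : Set (Fin n)) ≃ (Set.range j1 : Set (Fin n)) :=
    (Equiv.ofInjective j2 h2).symm.trans (Equiv.ofInjective j1 h1)
  refine ⟨(Equiv.Set.sumCompl (Set.range j2)).symm.trans
    ((Equiv.sumCongr eR eC).trans (Equiv.Set.sumCompl (Set.range j1))), fun i => ?_⟩
  have hmem : j2 i ∈ Set.range j2 := ⟨i, rfl⟩
  simp only [Equiv.trans_apply]
  rw [Equiv.Set.sumCompl_symm_apply_of_mem hmem]
  simp only [Equiv.Set.sumCompl_apply_inl, Equiv.sumCongr_apply, Sum.map_inl]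
  show ((eR ⟨j2 i, hmem⟩ : (Set.range j1 : Set (Fin n))) : Fin n) = j1 i
  have : eR ⟨j2 i, hmem⟩ = (Equiv.ofInjective j1 h1) i := by
    simp only [eR, Equiv.trans_apply]
    congr 1
    exact (Equiv.ofInjective j2 h2).symm_apply_apply i
  rw [this]
  rfl

/-- The subgraph of `G` obtained by removing edges inside `S`. -/
def restr {V : Type*} (G : SimpleGraph V) (S : Set V) : SimpleGraph V where
  Adj x y := G.Adj x y ∧ ¬(x ∈ S ∧ y ∈ S)
  symm := ⟨fun x y h => ⟨h.1.symm, fun hc => h.2 ⟨hc.2, hc.1⟩⟩⟩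
  loopless := ⟨fun x h => G.irrefl h.1⟩

lemma restr_le {V : Type*} (G : SimpleGraph V) (S : Set V) : restr G S ≤ G :=
  fun _ _ h => h.1

lemma restr_adj {V : Type*} (G : SimpleGraph V) (S : Set V) (x y : V) :
    (restr G S).Adj x y ↔ G.Adj x y ∧ ¬(x ∈ S ∧ y ∈ S) := Iff.rfl

lemma merge {V : Type*} [Fintype V] (G : SimpleGraph V) (u v : V) (A B : Set V)
    (huv : G.Adj u v)
    (hAu : u ∉ A) (hAv : v ∉ A) (hBu : u ∉ B) (hBv : v ∉ B)
    (hAB : ∀ x, x ∈ A → x ∉ B)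
    (hcover : ∀ x, x ≠ u → x ≠ v → x ∈ A ∨ x ∈ B)
    (hcross : ∀ a ∈ A, ∀ b ∈ B, ¬ G.Adj a b)
    (c1 : Sym2 V → Fin 13) (hc1 : (restr G B).IsStrongEdgeColoring c1)
    (c2 : Sym2 V → Fin 13) (hc2 : (restr G A).IsStrongEdgeColoring c2) :
    G.HasStrongColoring 13 := by
  classical
  -- edges incident to u or v belong to both restricted graphs
  have hIncE : ∀ f ∈ G.edgeSet, (u ∈ f ∨ v ∈ f) →
      f ∈ (restr G B).edgeSet ∧ f ∈ (restr G A).edgeSet := by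
    intro f hf hInc
    induction f with
    | _ x y =>
      rw [mem_edgeSet] at hf
      simp only [Sym2.mem_iff] at hInc
      constructor <;> rw [mem_edgeSet, restr_adj] <;> refine ⟨hf, ?_⟩ <;>
        rintro ⟨hx, hy⟩ <;>
        rcases hInc with (rfl | rfl) | (rfl | rfl) <;>
        first
          | exact hBu hx | exact hBu hy | exact hBv hx | exact hBv hy
          | exact hAu hx | exact hAu hy | exact hAv hx | exact hAv hy
  -- two distinct edges both incident to {u,v} see each other in both restricted graphs
  have hI2 : ∀ f, ∀ g, (u ∈ f ∨ v ∈ f) → (u ∈ g ∨ v ∈ g) →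
      (restr G B).Sees f g ∧ (restr G A).Sees f g := by
    intro f g hIf hIg
    have hadjB : (restr G B).Adj u v := ⟨huv, fun hc => hBu hc.1⟩
    have hadjA : (restr G A).Adj u v := ⟨huv, fun hc => hAu hc.1⟩
    rcases hIf with hfu | hfv <;> rcases hIg with hgu | hgv
    · exact ⟨⟨u, hfu, u, hgu, Or.inl rfl⟩, ⟨u, hfu, u, hgu, Or.inl rfl⟩⟩
    · exact ⟨⟨u, hfu, v, hgv, Or.inr hadjB⟩, ⟨u, hfu, v, hgv, Or.inr hadjA⟩⟩
    · exact ⟨⟨v, hfv, u, hgu, Or.inr hadjB.symm⟩, ⟨v, hfv, u, hgu, Or.inr hadjA.symm⟩⟩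
    · exact ⟨⟨v, hfv, v, hgv, Or.inl rfl⟩, ⟨v, hfv, v, hgv, Or.inl rfl⟩⟩
  -- the permutation aligning c2 with c1 on edges incident to {u,v}
  let E := {f : Sym2 V // f ∈ G.edgeSet ∧ (u ∈ f ∨ v ∈ f)}
  have hj1 : Function.Injective (fun f : E => c1 f.1) := by
    intro f g h
    by_contra hne
    have hne' : f.1 ≠ g.1 := fun hh => hne (Subtype.ext hh)
    have := hc1 f.1 ((hIncE _ f.2.1 f.2.2).1) g.1 ((hIncE _ g.2.1 g.2.2).1) hne'
      (hI2 f.1 g.1 f.2.2 g.2.2).1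
    exact this h
  have hj2 : Function.Injective (fun f : E => c2 f.1) := by
    intro f g h
    by_contra hne
    have hne' : f.1 ≠ g.1 := fun hh => hne (Subtype.ext hh)
    have := hc2 f.1 ((hIncE _ f.2.1 f.2.2).2) g.1 ((hIncE _ g.2.1 g.2.2).2) hne'
      (hI2 f.1 g.1 f.2.2 g.2.2).2
    exact this h
  obtain ⟨π, hπ⟩ := exists_perm_comp _ _ hj1 hj2
  have hπ' : ∀ f (hf : f ∈ G.edgeSet) (h : u ∈ f ∨ v ∈ f), π (c2 f) = c1 f :=
    fun f hf h => hπ ⟨f, hf, h⟩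
  -- edges not in restr G B are inside B
  have hnotE1 : ∀ f ∈ G.edgeSet, f ∉ (restr G B).edgeSet → ∀ x ∈ f, x ∈ B := by
    intro f hf hnf
    induction f with
    | _ x y =>
      rw [mem_edgeSet] at hf
      rw [mem_edgeSet, restr_adj] at hnf
      have hB : x ∈ B ∧ y ∈ B := by
        by_contra hc
        exact hnf ⟨hf, hc⟩
      intro z hz
      rcases Sym2.mem_iff.1 hz with rfl | rfl
      · exact hB.1
      · exact hB.2
  have hE2ofB : ∀ f ∈ G.edgeSet, (∀ x ∈ f, x ∈ B) → f ∈ (restr G A).edgeSet := by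
    intro f hf hfB
    induction f with
    | _ x y =>
      rw [mem_edgeSet] at hf
      rw [mem_edgeSet, restr_adj]
      exact ⟨hf, fun hc => hAB x hc.1 (hfB x (Sym2.mem_mk_left x y))⟩
  -- not in A, given in B
  have hnA : ∀ x ∈ B, x ∉ A := fun x hx hxA => hAB x hxA hx
  -- given an edge with one endpoint in B, and the edge is in restr G B, the other endpoint is u or v
  have hother : ∀ e ∈ G.edgeSet, e ∈ (restr G B).edgeSet → ∀ a ∈ e, a ∈ B →
      (u ∈ e ∨ v ∈ e) := by
    intro e he he1 a hae haB
    obtain ⟨z, rfl⟩ := Sym2.mem_iff_exists.1 hae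
    rw [mem_edgeSet] at he
    rw [mem_edgeSet, restr_adj] at he1
    have hzB : z ∉ B := fun hz => he1.2 ⟨haB, hz⟩
    have hzA : z ∉ A := fun hz => hcross z hz a haB he.symm
    have : z = u ∨ z = v := by
      by_contra hc
      push_neg at hc
      rcases hcover z hc.1 hc.2 with h | h
      · exact hzA h
      · exact hzB h
    rcases this with rfl | rfl
    · exact Or.inl (Sym2.mem_mk_right _ _)
    · exact Or.inr (Sym2.mem_mk_right _ _)
  -- key fact for cross pairs
  have key3 : ∀ e ∈ G.edgeSet, ∀ f ∈ G.edgeSet, G.Sees e f →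
      e ∈ (restr G B).edgeSet → f ∉ (restr G B).edgeSet →
      (u ∈ e ∨ v ∈ e) ∧ f ∈ (restr G A).edgeSet ∧ (restr G A).Sees e f := by
    intro e he f hf hsees he1 hf1
    have hfB := hnotE1 f hf hf1
    have hfE2 := hE2ofB f hf hfB
    obtain ⟨a, hae, b, hbf, hab⟩ := hsees
    have hbB : b ∈ B := hfB b hbf
    rcases hab with rfl | hab
    · -- shared endpoint a = b ∈ B
      exact ⟨hother e he he1 a hae hbB, hfE2,
        ⟨a, hae, a, hbf, Or.inl rfl⟩⟩
    · -- adjacent witness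
      have haA : a ∉ A := fun hA => hcross a hA b hbB hab
      by_cases haB : a ∈ B
      · exact ⟨hother e he he1 a hae haB, hfE2,
          ⟨a, hae, b, hbf, Or.inr ⟨hab, fun hc => hnA a haB hc.1⟩⟩⟩
      · have hauv : a = u ∨ a = v := by
          by_contra hc
          push_neg at hc
          rcases hcover a hc.1 hc.2 with h | h
          · exact haA h
          · exact haB h
        have hInce : u ∈ e ∨ v ∈ e := by
          rcases hauv with rfl | rfl
          · exact Or.inl hae
          · exact Or.inr hae
        exact ⟨hInce, hfE2, ⟨a, hae, b, hbf, Or.inr ⟨hab, fun hc => haA hc.1⟩⟩⟩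
  -- distinct edges of restr G B that see each other in G get distinct c1-colors
  have key1 : ∀ e ∈ G.edgeSet, ∀ f ∈ G.edgeSet, e ≠ f → G.Sees e f →
      e ∈ (restr G B).edgeSet → f ∈ (restr G B).edgeSet → c1 e ≠ c1 f := by
    intro e he f hf hne hsees he1 hf1
    obtain ⟨a, hae, b, hbf, hab⟩ := hsees
    rcases hab with rfl | hab
    · exact hc1 e he1 f hf1 hne ⟨a, hae, a, hbf, Or.inl rfl⟩
    · by_cases hab' : a ∈ B ∧ b ∈ B
      · have hInce := hother e he he1 a hae hab'.1
        have hIncf := hother f hf hf1 b hbf hab'.2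
        exact hc1 e he1 f hf1 hne (hI2 e f hInce hIncf).1
      · exact hc1 e he1 f hf1 hne ⟨a, hae, b, hbf, Or.inr ⟨hab, hab'⟩⟩
  -- similarly for edges inside B with c2
  have key2 : ∀ e ∈ G.edgeSet, ∀ f ∈ G.edgeSet, e ≠ f → G.Sees e f →
      e ∉ (restr G B).edgeSet → f ∉ (restr G B).edgeSet → c2 e ≠ c2 f := by
    intro e he f hf hne hsees he1 hf1
    obtain ⟨a, hae, b, hbf, hab⟩ := hsees
    have heE2 := hE2ofB e he (hnotE1 e he he1)
    have hfE2 := hE2ofB f hf (hnotE1 f hf hf1)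
    rcases hab with rfl | hab
    · exact hc2 e heE2 f hfE2 hne ⟨a, hae, a, hbf, Or.inl rfl⟩
    · have haB : a ∈ B := hnotE1 e he he1 a hae
      exact hc2 e heE2 f hfE2 hne
        ⟨a, hae, b, hbf, Or.inr ⟨hab, fun hc => hnA a haB hc.1⟩⟩
  -- final coloring
  refine ⟨fun f => if f ∈ (restr G B).edgeSet then c1 f else π (c2 f), ?_⟩
  intro e he f hf hne hsees
  by_cases he1 : e ∈ (restr G B).edgeSet <;> by_cases hf1 : f ∈ (restr G B).edgeSet <;>
    simp only [he1, hf1, if_pos, if_neg, if_true, if_false]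
  · exact key1 e he f hf hne hsees he1 hf1
  · -- e in E1, f inside B
    obtain ⟨hInce, hfE2, hseesA⟩ := key3 e he f hf hsees he1 hf1
    have heE2 := (hIncE e he hInce).2
    have h2 : c2 e ≠ c2 f := hc2 e heE2 f hfE2 hne hseesA
    rw [← hπ' e he hInce]
    exact fun hc => h2 (π.injective hc)
  · -- f in E1, e inside B
    have hsees' : G.Sees f e := sees_symm hsees
    obtain ⟨hIncf, heE2, hseesA⟩ := key3 f hf e he hsees' hf1 he1
    have hfE2 := (hIncE f hf hIncf).2
    have h2 : c2 f ≠ c2 e := hc2 f hfE2 e heE2 (Ne.symm hne) hseesA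
    rw [← hπ' f hf hIncf]
    exact fun hc => h2 (π.injective hc.symm)
  · exact fun hc => key2 e he f hf hne hsees he1 hf1 (π.injective hc)

lemma pendant {V : Type*} [Fintype V] [DecidableEq V] (G : SimpleGraph V) [DecidableRel G.Adj]
    (hore : ∀ x y : V, G.Adj x y → G.degree x + G.degree y ≤ 7)
    (b p q : V) (hpb : G.Adj p b) (hpq : G.Adj p q) (hbq : b ≠ q)
    (hbN : ∀ y, G.Adj b y → y = p ∨ y = q)
    (hcol : (G.deleteEdges {s(p,b)}).HasStrongColoring 13) :
    G.HasStrongColoring 13 := by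
  classical
  obtain ⟨c, hc⟩ := hcol
  set e0 : Sym2 V := s(p, b) with he0def
  have hpb' : p ≠ b := hpb.ne
  have hpq' : p ≠ q := hpq.ne
  -- the set of edges whose color is forbidden for e0
  set F : Finset (Sym2 V) := G.edgeFinset.filter (fun f => f ≠ e0 ∧ G.Sees e0 f) with hFdef
  set T : Finset V := insert p (G.neighborFinset p) with hTdef
  have hbT : b ∈ T := by simp [hTdef, hpb]
  have hqT : q ∈ T := by simp [hTdef, hpq]
  have hpT : p ∈ T := by simp [hTdef]
  -- every forbidden edge touches T
  have hFtouch : ∀ f ∈ F, ∃ w ∈ T, w ∈ f := by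
    intro f hf
    rw [hFdef, Finset.mem_filter] at hf
    obtain ⟨a, hae, w, hwf, haw⟩ := hf.2.2
    have ha : a = p ∨ a = b := by
      rcases Sym2.mem_iff.1 hae with h | h
      · exact Or.inl h
      · exact Or.inr h
    rcases haw with rfl | haw
    · rcases ha with rfl | rfl
      · exact ⟨a, hpT, hwf⟩
      · exact ⟨a, hbT, hwf⟩
    · rcases ha with rfl | rfl
      · exact ⟨w, by simp [hTdef, haw], hwf⟩
      · rcases hbN w haw with rfl | rfl
        · exact ⟨w, hpT, hwf⟩
        · exact ⟨w, hqT, hwf⟩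
  -- choice of touching vertex
  have htex : ∀ f : Sym2 V, f ∈ F → ∃ w, w ∈ T ∧ w ∈ f := by
    intro f hf; obtain ⟨w, h1, h2⟩ := hFtouch f hf; exact ⟨w, h1, h2⟩
  let t : Sym2 V → V := fun f => if h : ∃ w, w ∈ T ∧ w ∈ f then h.choose else p
  have ht : ∀ f ∈ F, t f ∈ T ∧ t f ∈ f := by
    intro f hf
    have h := htex f hf
    simp only [t, dif_pos h]
    exact h.choose_spec
  -- counting
  set S : Finset ((_ : V) × Sym2 V) := T.sigma (fun w => G.incidenceFinset w) with hSdef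
  have hcardS : S.card = ∑ w ∈ T, G.degree w := by
    rw [hSdef, Finset.card_sigma]
    exact Finset.sum_congr rfl fun w _ => card_incidenceFinset_eq_degree G w
  set Img : Finset ((_ : V) × Sym2 V) := F.image (fun f => ⟨t f, f⟩) with hImgdef
  have hImgcard : Img.card = F.card := by
    rw [hImgdef]
    apply Finset.card_image_of_injOn
    intro f _ g _ hfg
    exact (Sigma.mk.inj_iff.1 hfg).2.eq
  have hImgsub : Img ⊆ S := by
    intro x hx
    rw [hImgdef, Finset.mem_image] at hx
    obtain ⟨f, hf, rfl⟩ := hx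
    rw [hSdef, Finset.mem_sigma]
    refine ⟨(ht f hf).1, ?_⟩
    rw [mem_incidenceFinset]
    refine ⟨?_, (ht f hf).2⟩
    exact mem_edgeFinset.1 (Finset.mem_filter.1 (hFdef ▸ hf)).1
  have he0mem : e0 ∈ G.edgeFinset := mem_edgeFinset.2 (by rw [he0def, mem_edgeSet]; exact hpb)
  have hpe0 : p ∈ e0 := by rw [he0def]; exact Sym2.mem_mk_left _ _
  have hbe0 : b ∈ e0 := by rw [he0def]; exact Sym2.mem_mk_right _ _
  have hImgne0 : ∀ x ∈ Img, x.2 ≠ e0 := by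
    intro x hx
    rw [hImgdef, Finset.mem_image] at hx
    obtain ⟨f, hf, rfl⟩ := hx
    exact (Finset.mem_filter.1 (hFdef ▸ hf)).2.1
  have hx1S : (⟨p, e0⟩ : (_ : V) × Sym2 V) ∈ S := by
    rw [hSdef, Finset.mem_sigma, mem_incidenceFinset]
    exact ⟨hpT, mem_edgeFinset.1 he0mem, hpe0⟩
  have hx2S : (⟨b, e0⟩ : (_ : V) × Sym2 V) ∈ S := by
    rw [hSdef, Finset.mem_sigma, mem_incidenceFinset]
    exact ⟨hbT, mem_edgeFinset.1 he0mem, hbe0⟩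
  have hx12 : (⟨p, e0⟩ : (_ : V) × Sym2 V) ≠ ⟨b, e0⟩ := by
    intro h
    exact hpb' (Sigma.mk.inj_iff.1 h).1
  have hdegp1 : 1 ≤ G.degree p := by
    rw [← card_neighborFinset_eq_degree]
    exact Finset.card_pos.2 ⟨b, by rw [mem_neighborFinset]; exact hpb⟩
  have hdegb1 : 1 ≤ G.degree b := by
    rw [← card_neighborFinset_eq_degree]
    exact Finset.card_pos.2 ⟨p, by rw [mem_neighborFinset]; exact hpb.symm⟩
  have hab7 : G.degree p + G.degree b ≤ 7 := hore p b hpb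
  have hsum_erase : ∑ w ∈ (G.neighborFinset p).erase b, G.degree w ≤
      (G.degree p - 1) * (7 - G.degree p) := by
    have := Finset.sum_le_card_nsmul ((G.neighborFinset p).erase b) (fun w => G.degree w)
      (7 - G.degree p) ?_
    · rwa [Finset.card_erase_of_mem (by rw [mem_neighborFinset]; exact hpb),
        card_neighborFinset_eq_degree, smul_eq_mul] at this
    · intro w hw
      show G.degree w ≤ 7 - G.degree p
      have hadj : G.Adj p w := by
        rw [← mem_neighborFinset]
        exact Finset.mem_of_mem_erase hw
      have := hore p w hadj
      omega
  have hsumT : ∑ w ∈ T, G.degree w =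
      G.degree p + (G.degree b + ∑ w ∈ (G.neighborFinset p).erase b, G.degree w) := by
    have hpn : p ∉ G.neighborFinset p := by
      rw [mem_neighborFinset]
      exact G.irrefl
    have hbn : b ∈ G.neighborFinset p := by rw [mem_neighborFinset]; exact hpb
    rw [hTdef, Finset.sum_insert hpn, ← Finset.add_sum_erase _ _ hbn]
  -- bound on F.card
  have hFcard : F.card ≤ 12 := by
    by_cases hbqadj : G.Adj b q
    · -- b is adjacent to q as well
      have hdegb2 : G.degree b ≤ 2 := by
        rw [← card_neighborFinset_eq_degree]
        calc (G.neighborFinset b).card ≤ ({p, q} : Finset V).card := by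
              apply Finset.card_le_card
              intro w hw
              rw [mem_neighborFinset] at hw
              rcases hbN w hw with rfl | rfl <;> simp
          _ ≤ 2 := Finset.card_insert_le _ _ |>.trans (by simp)
      set f1 : Sym2 V := s(b, q) with hf1def
      have hf1ne : f1 ≠ e0 := by
        rw [hf1def, he0def]
        intro h
        rcases Sym2.eq_iff.1 h with ⟨h1, _⟩ | ⟨_, h2⟩
        · exact hpb' h1.symm
        · exact hpq' h2.symm
      have hf1F : f1 ∈ F := by
        rw [hFdef, Finset.mem_filter]
        refine ⟨mem_edgeFinset.2 (by rw [hf1def, mem_edgeSet]; exact hbqadj), hf1ne, ?_⟩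
        exact ⟨b, hbe0, b, by rw [hf1def]; exact Sym2.mem_mk_left _ _, Or.inl rfl⟩
      have hf1mem : f1 ∈ G.edgeFinset := mem_edgeFinset.2 (by rw [hf1def]; exact hbqadj)
      set x3 : (_ : V) × Sym2 V := if t f1 = b then ⟨q, f1⟩ else ⟨b, f1⟩ with hx3def
      have hx3S : x3 ∈ S := by
        rw [hx3def]
        split <;> rw [hSdef, Finset.mem_sigma, mem_incidenceFinset]
        · exact ⟨hqT, mem_edgeFinset.1 hf1mem, by rw [hf1def]; exact Sym2.mem_mk_right _ _⟩
        · exact ⟨hbT, mem_edgeFinset.1 hf1mem, by rw [hf1def]; exact Sym2.mem_mk_left _ _⟩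
      have hx3Img : x3 ∉ Img := by
        intro hmem
        rw [hImgdef, Finset.mem_image] at hmem
        obtain ⟨f, hf, hfeq⟩ := hmem
        rw [hx3def] at hfeq
        by_cases hcase : t f1 = b
        · rw [if_pos hcase] at hfeq
          obtain ⟨h1, h2⟩ := Sigma.mk.inj_iff.1 hfeq
          have : f = f1 := h2.eq
          subst this
          rw [hcase] at h1
          exact hbq h1
        · rw [if_neg hcase] at hfeq
          obtain ⟨h1, h2⟩ := Sigma.mk.inj_iff.1 hfeq
          have : f = f1 := h2.eq
          subst this
          exact hcase h1
      have hx3x12 : x3 ≠ ⟨p, e0⟩ ∧ x3 ≠ ⟨b, e0⟩ := by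
        constructor
        · rw [hx3def]
          split <;> intro h <;> exact hf1ne (Sigma.mk.inj_iff.1 h).2.eq
        · rw [hx3def]
          split <;> intro h <;> exact hf1ne (Sigma.mk.inj_iff.1 h).2.eq
      -- assemble
      have hdisj : Disjoint Img ({⟨p, e0⟩, ⟨b, e0⟩, x3} : Finset ((_ : V) × Sym2 V)) := by
        rw [Finset.disjoint_right]
        intro x hx hxI
        simp only [Finset.mem_insert, Finset.mem_singleton] at hx
        rcases hx with rfl | rfl | rfl
        · exact hImgne0 _ hxI rfl
        · exact hImgne0 _ hxI rfl
        · exact hx3Img hxI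
      have hcard3 : ({⟨p, e0⟩, ⟨b, e0⟩, x3} : Finset ((_ : V) × Sym2 V)).card = 3 := by
        rw [Finset.card_insert_of_notMem, Finset.card_insert_of_notMem, Finset.card_singleton]
        · simp only [Finset.mem_singleton]
          exact fun h => hx3x12.2 h.symm
        · simp only [Finset.mem_insert, Finset.mem_singleton]
          push_neg
          exact ⟨hx12, fun h => hx3x12.1 h.symm⟩
      have hsub : Img ∪ {⟨p, e0⟩, ⟨b, e0⟩, x3} ⊆ S := by
        apply Finset.union_subset hImgsub
        intro x hx
        simp only [Finset.mem_insert, Finset.mem_singleton] at hx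
        rcases hx with rfl | rfl | rfl
        · exact hx1S
        · exact hx2S
        · exact hx3S
      have := Finset.card_le_card hsub
      rw [Finset.card_union_of_disjoint hdisj, hImgcard, hcard3, hcardS, hsumT] at this
      have key : ∀ a : ℕ, 1 ≤ a → a ≤ 6 → a + (a - 1) * (7 - a) ≤ 13 := by
        intro a h1 h2
        interval_cases a <;> norm_num
      have hprod : G.degree p + (G.degree p - 1) * (7 - G.degree p) ≤ 13 :=
        key _ hdegp1 (by omega)
      omega
    · -- b has p as its only neighbor
      have hdegb2 : G.degree b ≤ 1 := by
        rw [← card_neighborFinset_eq_degree]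
        calc (G.neighborFinset b).card ≤ ({p} : Finset V).card := by
              apply Finset.card_le_card
              intro w hw
              rw [mem_neighborFinset] at hw
              rcases hbN w hw with rfl | rfl
              · simp
              · exact absurd hw hbqadj
          _ ≤ 1 := by simp
      have hdisj : Disjoint Img ({⟨p, e0⟩, ⟨b, e0⟩} : Finset ((_ : V) × Sym2 V)) := by
        rw [Finset.disjoint_right]
        intro x hx hxI
        simp only [Finset.mem_insert, Finset.mem_singleton] at hx
        rcases hx with rfl | rfl
        · exact hImgne0 _ hxI rfl
        · exact hImgne0 _ hxI rfl
      have hcard2 : ({⟨p, e0⟩, ⟨b, e0⟩} : Finset ((_ : V) × Sym2 V)).card = 2 := by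
        rw [Finset.card_insert_of_notMem (by simpa using hx12), Finset.card_singleton]
      have hsub : Img ∪ {⟨p, e0⟩, ⟨b, e0⟩} ⊆ S := by
        apply Finset.union_subset hImgsub
        intro x hx
        simp only [Finset.mem_insert, Finset.mem_singleton] at hx
        rcases hx with rfl | rfl
        · exact hx1S
        · exact hx2S
      have := Finset.card_le_card hsub
      rw [Finset.card_union_of_disjoint hdisj, hImgcard, hcard2, hcardS, hsumT] at this
      have key : ∀ a : ℕ, 1 ≤ a → a ≤ 6 → a + (a - 1) * (7 - a) ≤ 13 := by
        intro a h1 h2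
        interval_cases a <;> norm_num
      have hprod : G.degree p + (G.degree p - 1) * (7 - G.degree p) ≤ 13 :=
        key _ hdegp1 (by omega)
      omega
  -- pick a fresh color for e0
  set used : Finset (Fin 13) := F.image c with husef
  have hused : used.card ≤ 12 := le_trans (Finset.card_image_le) hFcard
  have hfresh : ∃ k : Fin 13, k ∉ used := by
    by_contra hcon
    push_neg at hcon
    have : (Finset.univ : Finset (Fin 13)) ⊆ used := fun k _ => hcon k
    have := Finset.card_le_card this
    simp [Fintype.card_fin] at this
    omega
  obtain ⟨k, hk⟩ := hfresh
  -- edge membership in the deleted graph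
  have hGemem : ∀ f, f ∈ (G.deleteEdges {e0}).edgeSet ↔ f ∈ G.edgeSet ∧ f ≠ e0 := by
    intro f
    rw [edgeSet_deleteEdges, Set.mem_diff, Set.mem_singleton_iff]
  -- seeing transfers to the deleted graph
  have hGeSees : ∀ e ∈ G.edgeSet, ∀ f ∈ G.edgeSet, e ≠ e0 → f ≠ e0 → G.Sees e f →
      (G.deleteEdges {e0}).Sees e f := by
    intro e he f hf hee hfe hsees
    obtain ⟨a, hae, w, hwf, haw⟩ := hsees
    rcases haw with rfl | haw
    · exact ⟨a, hae, a, hwf, Or.inl rfl⟩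
    · by_cases hW : s(a, w) = e0
      · -- the witness edge is exactly the deleted edge {p, b}
        rw [he0def] at hW
        have hforbid : ∀ g, g ∈ G.edgeSet → g ≠ e0 → b ∈ g → q ∈ g ∧ G.Adj b q := by
          intro g hg hge hbg
          obtain ⟨z, rfl⟩ := Sym2.mem_iff_exists.1 hbg
          rw [mem_edgeSet] at hg
          rcases hbN z hg with rfl | rfl
          · exfalso
            apply hge
            rw [he0def, Sym2.eq_swap]
          · exact ⟨Sym2.mem_mk_right _ _, hg⟩
        have hne_pq : s(p, q) ≠ e0 := by
          rw [he0def]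
          intro h
          rcases Sym2.eq_iff.1 h with ⟨_, h2⟩ | ⟨h1, _⟩
          · exact hbq h2.symm
          · exact hpb' h1
        have hfe_adj : ∀ x y : V, G.Adj x y → s(x, y) ≠ e0 →
            (G.deleteEdges {e0}).Adj x y := by
          intro x y hxy hxyne
          refine ⟨hxy, ?_⟩
          intro hcon
          rw [fromEdgeSet_adj, Set.mem_singleton_iff] at hcon
          exact hxyne hcon.1
        rcases Sym2.eq_iff.1 hW with ⟨rfl, rfl⟩ | ⟨rfl, rfl⟩
        · -- a = p ∈ e, w = b ∈ f
          obtain ⟨hqf, hbq'⟩ := hforbid f hf hfe hwf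
          exact ⟨a, hae, q, hqf, Or.inr (hfe_adj a q hpq hne_pq)⟩
        · -- a = b ∈ e, w = p ∈ f
          obtain ⟨hqe, hbq'⟩ := hforbid e he hee hae
          refine ⟨q, hqe, w, hwf, Or.inr (hfe_adj q w hpq.symm ?_)⟩
          rw [Sym2.eq_swap]
          exact hne_pq
      · refine ⟨a, hae, w, hwf, Or.inr ⟨haw, ?_⟩⟩
        intro hcon
        rw [fromEdgeSet_adj, Set.mem_singleton_iff] at hcon
        exact hW hcon.1
  -- the extended coloring
  refine ⟨fun f => if f = e0 then k else c f, ?_⟩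
  intro e he f hf hne hsees
  by_cases he0' : e = e0 <;> by_cases hf0' : f = e0
  · exact absurd (he0'.trans hf0'.symm) hne
  · simp only [he0', hf0', if_pos, if_neg, if_true, if_false]
    have hfF : f ∈ F := by
      rw [hFdef, Finset.mem_filter]
      exact ⟨mem_edgeFinset.2 hf, hf0', he0' ▸ hsees⟩
    intro hkc
    apply hk
    rw [husef, hkc]
    exact Finset.mem_image_of_mem c hfF
  · simp only [he0', hf0', if_pos, if_neg, if_true, if_false]
    have heF : e ∈ F := by
      rw [hFdef, Finset.mem_filter]
      exact ⟨mem_edgeFinset.2 he, he0', hf0' ▸ sees_symm hsees⟩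
    intro hck
    apply hk
    rw [husef, ← hck]
    exact Finset.mem_image_of_mem c heF
  · simp only [he0', hf0', if_neg, if_false]
    exact hc e ((hGemem e).2 ⟨he, he0'⟩) f ((hGemem f).2 ⟨hf, hf0'⟩) hne
      (hGeSees e he f hf he0' hf0' hsees)

-- transport along a map that is adjacency preserving and injective on non-isolated vertices
lemma hasStrongColoring_of_map {V W : Type*} {G : SimpleGraph V} {H : SimpleGraph W} (φ : V → W)
    (h1 : ∀ ⦃a b⦄, G.Adj a b → H.Adj (φ a) (φ b))
    (h2 : ∀ ⦃a b⦄, (∃ z, G.Adj a z) → (∃ z, G.Adj b z) → φ a = φ b → a = b)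
    {n : ℕ} (h : H.HasStrongColoring n) : G.HasStrongColoring n := by
  obtain ⟨c, hc⟩ := h
  refine ⟨fun e => c (e.map φ), ?_⟩
  intro e he f hf hef hsees
  induction e with
  | _ x y =>
    induction f with
    | _ z w =>
      rw [mem_edgeSet] at he hf
      refine hc _ (by simpa using h1 he) _ (by simpa using h1 hf) ?_ ?_
      · simp only [Sym2.map_pair_eq]
        intro hcon
        apply hef
        rcases Sym2.eq_iff.1 hcon with ⟨hxz, hyw⟩ | ⟨hxw, hyz⟩
        · rw [h2 ⟨y, he⟩ ⟨w, hf⟩ hxz, h2 ⟨x, he.symm⟩ ⟨z, hf.symm⟩ hyw]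
        · rw [h2 ⟨y, he⟩ ⟨z, hf.symm⟩ hxw, h2 ⟨x, he.symm⟩ ⟨w, hf⟩ hyz, Sym2.eq_swap]
      · obtain ⟨a, hae, b, hbf, hab⟩ := hsees
        refine ⟨φ a, Sym2.mem_map.2 ⟨a, hae, rfl⟩, φ b, Sym2.mem_map.2 ⟨b, hbf, rfl⟩, ?_⟩
        rcases hab with rfl | hab
        · exact Or.inl rfl
        · exact Or.inr (h1 hab)

-- removing an isolated vertex preserves strong colorability
lemma isolated_transport {V : Type*} [DecidableEq V] (G : SimpleGraph V) (x a0 : V)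
    (hx : ∀ y, ¬ G.Adj x y) (ha0 : a0 ≠ x) {n : ℕ}
    (h : (((⊤ : G.Subgraph).deleteVerts {x}).coe).HasStrongColoring n) :
    G.HasStrongColoring n := by
  classical
  have hmem : ∀ y : V, y ≠ x → y ∈ ((⊤ : G.Subgraph).deleteVerts {x}).verts := by
    intro y hy
    simp [hy]
  refine hasStrongColoring_of_map
    (fun y => if hy : y = x then ⟨a0, hmem a0 ha0⟩ else ⟨y, hmem y hy⟩) ?_ ?_ h
  · intro a b hab
    have ha : a ≠ x := fun hh => hx b (hh ▸ hab)
    have hb : b ≠ x := fun hh => hx a (hh ▸ hab.symm)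
    rw [dif_neg ha, dif_neg hb, Subgraph.coe_adj]
    simp [Subgraph.deleteVerts_adj, ha, hb, hab]
  · intro a b ha hb hfab
    obtain ⟨za, hza⟩ := ha
    obtain ⟨zb, hzb⟩ := hb
    have ha' : a ≠ x := fun hh => hx za (hh ▸ hza)
    have hb' : b ≠ x := fun hh => hx zb (hh ▸ hzb)
    rw [dif_neg ha', dif_neg hb'] at hfab
    exact congrArg Subtype.val hfab

theorem statement5 {V : Type*} [Fintype V] [DecidableEq V]
    (G : SimpleGraph V) [DecidableRel G.Adj]
    (hore : ∀ u v : V, G.Adj u v → G.degree u + G.degree v ≤ 7)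
    (hG : ¬ G.HasStrongColoring 13)
    (hmin : ∀ H : G.Subgraph, H ≠ ⊤ → H.coe.HasStrongColoring 13) :
    ∀ u v : V, G.Adj u v →
      (((⊤ : G.Subgraph).deleteVerts {u, v}).coe).Connected := by
  classical
  intro u v huv
  by_contra hncon
  have huvne : u ≠ v := huv.ne
  -- a vertex other than u, v whose neighbors all lie in {u, v} yields a contradiction
  have nopendant : ∀ b : V, b ≠ u → b ≠ v → (∀ y, G.Adj b y → y = u ∨ y = v) → False := by
    intro b hbu hbv hbN
    by_cases hdeg : ∃ y, G.Adj b y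
    · -- b has a neighbor p ∈ {u, v}
      obtain ⟨y, hy⟩ := hdeg
      have main : ∀ p q : V, G.Adj p b → G.Adj p q → b ≠ q →
          (∀ z, G.Adj b z → z = p ∨ z = q) → False := by
        intro p q hpb hpq hbq hbN'
        have hle : G.deleteEdges {s(p, b)} ≤ G := deleteEdges_le _
        have hne : SimpleGraph.toSubgraph (G.deleteEdges {s(p, b)}) hle ≠ ⊤ := by
          intro hcon
          have h1 : (SimpleGraph.toSubgraph (G.deleteEdges {s(p, b)}) hle).Adj p b := by
            rw [hcon]
            exact Subgraph.top_adj.2 hpb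
          exact h1.2 ⟨rfl, hpb.ne⟩
        have hcol := hasStrongColoring_of_toSubgraph hle (hmin _ hne)
        exact hG (pendant G hore b p q hpb hpq hbq hbN' hcol)
      rcases hbN y hy with rfl | rfl
      · exact main y v hy.symm huv hbv (fun z hz => hbN z hz)
      · exact main y u hy.symm huv.symm hbu (fun z hz => (hbN z hz).symm)
    · -- b is isolated
      push_neg at hdeg
      have hxn : ∀ z, ¬ G.Adj b z := hdeg
      have hne : ((⊤ : G.Subgraph).deleteVerts {b}) ≠ ⊤ := by
        intro hcon
        have : b ∈ ((⊤ : G.Subgraph).deleteVerts {b}).verts := by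
          rw [hcon]; trivial
        simp at this
      exact hG (isolated_transport G b u hxn (Ne.symm hbu) (hmin _ hne))
  by_cases hWne : ∃ x : V, x ≠ u ∧ x ≠ v
  · -- V has a vertex besides u, v
    obtain ⟨x0raw, hx0u, hx0v⟩ := hWne
    have hx0mem : x0raw ∈ ((⊤ : G.Subgraph).deleteVerts {u, v}).verts := by
      simp [hx0u, hx0v]
    set K := (((⊤ : G.Subgraph).deleteVerts {u, v})).coe with hKdef
    have hKne : Nonempty (((⊤ : G.Subgraph).deleteVerts {u, v}).verts) := ⟨⟨x0raw, hx0mem⟩⟩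
    have hnp : ¬ K.Preconnected := fun hp => hncon ((SimpleGraph.connected_iff K).2 ⟨hp, hKne⟩)
    have hex : ∃ x0 y0, ¬ K.Reachable x0 y0 := by
      by_contra hcon
      push_neg at hcon
      exact hnp fun a b => hcon a b
    obtain ⟨x0, y0, hreach⟩ := hex
    set A : Set V := {x | ∃ h : x ∈ ((⊤ : G.Subgraph).deleteVerts {u, v}).verts,
      K.Reachable x0 ⟨x, h⟩} with hAdef
    set B : Set V := {x | ∃ h : x ∈ ((⊤ : G.Subgraph).deleteVerts {u, v}).verts,
      ¬ K.Reachable x0 ⟨x, h⟩} with hBdef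
    have humem : u ∉ ((⊤ : G.Subgraph).deleteVerts {u, v}).verts := by simp
    have hvmem : v ∉ ((⊤ : G.Subgraph).deleteVerts {u, v}).verts := by simp
    have hAu : u ∉ A := fun ⟨h, _⟩ => humem h
    have hAv : v ∉ A := fun ⟨h, _⟩ => hvmem h
    have hBu : u ∉ B := fun ⟨h, _⟩ => humem h
    have hBv : v ∉ B := fun ⟨h, _⟩ => hvmem h
    have hABd : ∀ x, x ∈ A → x ∉ B := by
      rintro x ⟨h1, hr⟩ ⟨h2, hnr⟩
      exact hnr hr
    have hmemuv : ∀ x : V, x ≠ u → x ≠ v → x ∈ ((⊤ : G.Subgraph).deleteVerts {u, v}).verts := by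
      intro x h1 h2
      simp [h1, h2]
    have hmemne : ∀ x : V, x ∈ ((⊤ : G.Subgraph).deleteVerts {u, v}).verts → x ≠ u ∧ x ≠ v := by
      intro x hx
      simp only [Subgraph.deleteVerts_verts, Subgraph.verts_top, Set.mem_diff,
        Set.mem_insert_iff, Set.mem_singleton_iff] at hx
      push_neg at hx
      exact hx.2
    have hcover : ∀ x : V, x ≠ u → x ≠ v → x ∈ A ∨ x ∈ B := by
      intro x h1 h2
      by_cases hr : K.Reachable x0 ⟨x, hmemuv x h1 h2⟩
      · exact Or.inl ⟨hmemuv x h1 h2, hr⟩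
      · exact Or.inr ⟨hmemuv x h1 h2, hr⟩
    have hKadj : ∀ (a b : V) (ha : a ∈ ((⊤ : G.Subgraph).deleteVerts {u, v}).verts)
        (hb : b ∈ ((⊤ : G.Subgraph).deleteVerts {u, v}).verts), G.Adj a b →
        K.Adj ⟨a, ha⟩ ⟨b, hb⟩ := by
      intro a b ha hb hab
      rw [hKdef, Subgraph.coe_adj]
      simp only [Subgraph.deleteVerts_verts, Subgraph.verts_top, Set.mem_diff] at ha hb
      simp [Subgraph.deleteVerts_adj, ha.2, hb.2, hab]
    have hcross : ∀ a ∈ A, ∀ b ∈ B, ¬ G.Adj a b := by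
      rintro a ⟨ha, hra⟩ b ⟨hb, hnrb⟩ hadj
      exact hnrb (hra.trans (SimpleGraph.Adj.reachable (hKadj a b ha hb hadj)))
    -- B is nonempty: it contains y0
    have hy0B : (y0 : V) ∈ B := ⟨y0.2, fun hr => hreach (by convert hr)⟩
    have hx0A : (x0 : V) ∈ A := ⟨x0.2, by convert SimpleGraph.Reachable.refl x0⟩
    by_cases heB : ∃ b1 b2, b1 ∈ B ∧ b2 ∈ B ∧ G.Adj b1 b2
    · by_cases heA : ∃ a1 a2, a1 ∈ A ∧ a2 ∈ A ∧ G.Adj a1 a2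
      · -- main case: merge colorings
        obtain ⟨b1, b2, hb1, hb2, hbb⟩ := heB
        obtain ⟨a1, a2, ha1, ha2, haa⟩ := heA
        have hle1 : restr G B ≤ G := restr_le G B
        have hle2 : restr G A ≤ G := restr_le G A
        have hne1 : SimpleGraph.toSubgraph (restr G B) hle1 ≠ ⊤ := by
          intro hcon
          have h1 : (SimpleGraph.toSubgraph (restr G B) hle1).Adj b1 b2 := by
            rw [hcon]; exact hbb
          exact h1.2 ⟨hb1, hb2⟩
        have hne2 : SimpleGraph.toSubgraph (restr G A) hle2 ≠ ⊤ := by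
          intro hcon
          have h1 : (SimpleGraph.toSubgraph (restr G A) hle2).Adj a1 a2 := by
            rw [hcon]; exact haa
          exact h1.2 ⟨ha1, ha2⟩
        obtain ⟨c1, hc1⟩ := hasStrongColoring_of_toSubgraph hle1 (hmin _ hne1)
        obtain ⟨c2, hc2⟩ := hasStrongColoring_of_toSubgraph hle2 (hmin _ hne2)
        exact hG (merge G u v A B huv hAu hAv hBu hBv hABd hcover hcross c1 hc1 c2 hc2)
      · -- A has no internal edge: x0.val is a pendant-type vertex
        have hx0uv := hmemne _ x0.2
        apply nopendant (x0 : V) hx0uv.1 hx0uv.2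
        intro y hy
        by_contra hcon
        push_neg at hcon
        rcases hcover y hcon.1 hcon.2 with hyA | hyB
        · exact heA ⟨(x0 : V), y, hx0A, hyA, hy⟩
        · exact hcross _ hx0A _ hyB hy
    · -- B has no internal edge: any b ∈ B is pendant-type
      obtain ⟨hbmem, -⟩ := id hy0B
      have hbuv := hmemne _ hbmem
      apply nopendant (y0 : V) hbuv.1 hbuv.2
      intro y hy
      by_contra hcon
      push_neg at hcon
      rcases hcover y hcon.1 hcon.2 with hyA | hyB
      · exact hcross _ hyA _ hy0B hy.symm
      · exact heB ⟨(y0 : V), y, hy0B, hyB, hy⟩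
  · -- every vertex is u or v, so G has at most one edge
    push_neg at hWne
    apply hG
    refine ⟨fun _ => (0 : Fin 13), ?_⟩
    intro e he f hf hne _
    exfalso
    have hedge : ∀ g ∈ G.edgeSet, g = s(u, v) := by
      intro g hg
      induction g with
      | _ x y =>
        rw [mem_edgeSet] at hg
        have hxy : x ≠ y := hg.ne
        by_cases hxu : x = u
        · by_cases hyu : y = u
          · exact absurd (hxu.trans hyu.symm) hxy
          · rw [hxu, hWne y hyu]
        · rw [hWne x hxu]
          by_cases hyu : y = u
          · rw [hyu, Sym2.eq_swap]
          · exact absurd ((hWne x hxu).trans (hWne y hyu).symm) hxy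
    exact hne ((hedge e he).trans (hedge f hf).symm)
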